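/- Let a, b, α : ℕ → ℝ be sequences with a n > 0 for all n and ∑ a n = ∞. Suppose there is a constant C > 0 such that ∑_{k ≤ m} |b k| ≤ C · ∑_{k ≤ m} a k for all m, that α n → α as n → ∞, and that β_m := (∑_{k ≤ m} b k) / (∑_{k ≤ m} a k) → β as m → ∞. Then (∑_{k ≤ m} α k · b k) / (∑_{k ≤ m} a k) → α · β as m → ∞. -/

import Mathlib

open Filter Finset

/-- A particular case of Toeplitz's theorem: if `a n > 0`, `∑ a = ∞`, the
partial sums of `|b|` are dominated by those of `a`, `α n → αlim` and
`(∑_{k≤m} b k)/(∑_{k≤m} a k) → β`, then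
`(∑_{k≤m} α k * b k)/(∑_{k≤m} a k) → αlim * β`. -/
theorem stmt14 (a b α : ℕ → ℝ) (ha : ∀ n, 0 < a n)
    (hdiv : Tendsto (fun m => ∑ k ∈ range (m + 1), a k) atTop atTop)
    (C : ℝ) (hC : 0 < C)
    (hbd : ∀ m, (∑ k ∈ range (m + 1), |b k|) ≤ C * ∑ k ∈ range (m + 1), a k)
    (αlim : ℝ) (hα : Tendsto α atTop (nhds αlim))
    (β : ℝ)
    (hβ : Tendsto
      (fun m => (∑ k ∈ range (m + 1), b k) / ∑ k ∈ range (m + 1), a k)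
      atTop (nhds β)) :
    Tendsto
      (fun m => (∑ k ∈ range (m + 1), α k * b k) / ∑ k ∈ range (m + 1), a k)
      atTop (nhds (αlim * β)) := by
  set A : ℕ → ℝ := fun m => ∑ k ∈ range (m + 1), a k with hA
  have hApos : ∀ m, 0 < A m := fun m =>
    Finset.sum_pos (fun k _ => ha k) ⟨0, by simp⟩
  have key : Tendsto
      (fun m => (∑ k ∈ range (m + 1), (α k - αlim) * b k) / A m)
      atTop (nhds 0) := by
    rw [Metric.tendsto_atTop]
    intro ε hε
    have hC2 : 0 < ε / (2 * C) := by positivity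
    obtain ⟨N, hN⟩ := (Metric.tendsto_atTop.1 hα) (ε / (2 * C)) hC2
    set K := ∑ k ∈ range N, |α k - αlim| * |b k| with hK
    have hK0 : 0 ≤ K :=
      Finset.sum_nonneg fun k _ => mul_nonneg (abs_nonneg _) (abs_nonneg _)
    obtain ⟨M, hM⟩ := eventually_atTop.1 (hdiv.eventually_ge_atTop (2 * K / ε + 1))
    refine ⟨max N M, fun m hm => ?_⟩
    have hmN : N ≤ m := le_trans (le_max_left _ _) hm
    have hmM : M ≤ m := le_trans (le_max_right _ _) hm
    have hAm : 2 * K / ε + 1 ≤ A m := hM m hmM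
    rw [Real.dist_eq, sub_zero, abs_div, abs_of_pos (hApos m),
      div_lt_iff₀ (hApos m)]
    have h2 : 2 * K < A m * ε :=
      (div_lt_iff₀ hε).1 (lt_of_lt_of_le (lt_add_one _) hAm)
    calc |∑ k ∈ range (m + 1), (α k - αlim) * b k|
        ≤ ∑ k ∈ range (m + 1), |(α k - αlim) * b k| :=
          Finset.abs_sum_le_sum_abs _ _
      _ = ∑ k ∈ range (m + 1), |α k - αlim| * |b k| := by
          simp [abs_mul]
      _ = K + ∑ k ∈ Ico N (m + 1), |α k - αlim| * |b k| :=
          (Finset.sum_range_add_sum_Ico _ (by omega)).symm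
      _ ≤ K + ∑ k ∈ Ico N (m + 1), ε / (2 * C) * |b k| := by
          gcongr K + ∑ k ∈ Ico N (m + 1), ?_ with k hk
          have := hN k (Finset.mem_Ico.1 hk).1
          rw [Real.dist_eq] at this
          exact mul_le_mul_of_nonneg_right this.le (abs_nonneg _)
      _ = K + ε / (2 * C) * ∑ k ∈ Ico N (m + 1), |b k| := by
          rw [Finset.mul_sum]
      _ ≤ K + ε / (2 * C) * ∑ k ∈ range (m + 1), |b k| := by
          refine add_le_add_right (mul_le_mul_of_nonneg_left ?_ hC2.le) K
          exact Finset.sum_le_sum_of_subset_of_nonneg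
              (by rw [Finset.range_eq_Ico]; exact Finset.Ico_subset_Ico (Nat.zero_le _) le_rfl)
              (fun k _ _ => abs_nonneg _)
      _ ≤ K + ε / (2 * C) * (C * A m) := by
          gcongr
          exact hbd m
      _ = K + ε / 2 * A m := by
          field_simp
      _ < ε * A m := by nlinarith
  have heq : ∀ m,
      (∑ k ∈ range (m + 1), α k * b k) / A m
        = (∑ k ∈ range (m + 1), (α k - αlim) * b k) / A m
          + αlim * ((∑ k ∈ range (m + 1), b k) / A m) := by
    intro m
    have hsum : ∑ k ∈ range (m + 1), (α k - αlim) * b k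
        = (∑ k ∈ range (m + 1), α k * b k)
          - αlim * ∑ k ∈ range (m + 1), b k := by
      simp [sub_mul, Finset.sum_sub_distrib, Finset.mul_sum]
    rw [hsum, sub_div, mul_div_assoc]
    ring
  have hfin := key.add (hβ.const_mul αlim)
  rw [zero_add] at hfin
  exact hfin.congr (fun m => (heq m).symm)
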